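/- Proposition 1(I): Let G be a finite simple connected graph on vertex set V with at least two vertices, let c : V → ℝ be uniquely balanced with respect to G, and let H be a spanning subgraph of G. Then every optimal solution (θ*, d₊*, d₋*) of the connectedness LP associated with (H, c) satisfies Σ_{v∈V} (d₊*(v) + d₋*(v)) = 0 if and only if H is connected. -/

import Mathlib

open Matrix
open scoped Classical

/-- `c : V → ℝ` is *uniquely balanced* with respect to `G` if its entries sum to zero over `V`,
and sum to a nonzero value over every nonempty proper subset `S ⊊ V` inducing a connected
subgraph of `G`. -/
def UniquelyBalanced {V : Type} [Fintype V] (G : SimpleGraph V) (c : V → ℝ) : Prop :=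
  (∑ v, c v = 0) ∧
    ∀ S : Set V, S.Nonempty → S ≠ Set.univ → (G.induce S).Connected →
      ∑ v ∈ S.toFinset, c v ≠ 0

section Aux

variable {V : Type} [Fintype V] [DecidableEq V]

/-- Walks in `H` with support inside `S` give reachability in `G.induce S` when `H ≤ G`. -/
lemma aux_walk_reachable_induce {H G : SimpleGraph V} (hHG : H ≤ G) (S : Set V) :
    ∀ {a b : V} (p : H.Walk a b) (ha : a ∈ S) (hb : b ∈ S),
      (∀ v ∈ p.support, v ∈ S) → (G.induce S).Reachable ⟨a, ha⟩ ⟨b, hb⟩ := by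
  intro a b p
  induction p with
  | nil => intro ha hb _; exact SimpleGraph.Reachable.refl _
  | @cons x y z h q ih =>
      intro ha hb hsupp
      have hy : y ∈ S := hsupp y (by simp [SimpleGraph.Walk.support_cons])
      have hadj : (G.induce S).Adj ⟨x, ha⟩ ⟨y, hy⟩ := hHG h
      exact hadj.reachable.trans (ih hy hb (fun v hv => hsupp v (by
        simp [SimpleGraph.Walk.support_cons, hv])))

/-- Sum of `(L *ᵥ θ)` over a union of connected components vanishes. -/
lemma aux_sum_lap_zero (H : SimpleGraph V) (S : Set V)
    (hS : ∀ i j, H.Reachable i j → (i ∈ S ↔ j ∈ S)) (θ : V → ℝ) :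
    ∑ v ∈ S.toFinset, (H.lapMatrix ℝ *ᵥ θ) v = 0 := by
  set x : V → ℝ := fun v => if v ∈ S then 1 else 0 with hx
  have hker : H.lapMatrix ℝ *ᵥ x = 0 := by
    have h := (H.lapMatrix_mulVec_eq_zero_iff_forall_reachable (x := x)).mpr ?_
    · exact h
    · intro i j hij
      simp only [hx]
      exact if_congr (hS i j hij) rfl rfl
  have hdot : ∀ y : V → ℝ, x ⬝ᵥ y = ∑ v ∈ S.toFinset, y v := by
    intro y
    rw [dotProduct]
    rw [show S.toFinset = Finset.univ.filter (· ∈ S) by ext v; simp]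
    rw [Finset.sum_filter]
    refine Finset.sum_congr rfl fun v _ => ?_
    by_cases hv : v ∈ S <;> simp [hx, hv]
  calc ∑ v ∈ S.toFinset, (H.lapMatrix ℝ *ᵥ θ) v
      = x ⬝ᵥ (H.lapMatrix ℝ *ᵥ θ) := (hdot _).symm
    _ = (x ᵥ* H.lapMatrix ℝ) ⬝ᵥ θ := (Matrix.dotProduct_mulVec _ _ _)
    _ = (H.lapMatrix ℝ *ᵥ x) ⬝ᵥ θ := by
        congr 1
        rw [← Matrix.vecMul_transpose, (H.isSymm_lapMatrix ℝ).eq]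
    _ = 0 := by rw [hker, zero_dotProduct]

/-- For a connected graph, every sum-zero vector is in the range of the Laplacian. -/
lemma aux_lap_surj (H : SimpleGraph V) (hH : H.Connected) (hcard : 2 ≤ Fintype.card V)
    (c : V → ℝ) (hc : ∑ v, c v = 0) : ∃ θ : V → ℝ, H.lapMatrix ℝ *ᵥ θ = c := by
  have hne : Nonempty V := Fintype.card_pos_iff.mp (by omega)
  set T := Matrix.toLin' (H.lapMatrix ℝ) with hT
  set s : (V → ℝ) →ₗ[ℝ] ℝ := ∑ v : V, LinearMap.proj v with hs
  have hs_apply : ∀ x : V → ℝ, s x = ∑ v, x v := by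
    intro x; simp [hs]
  -- kernel of T has dimension 1
  haveI : Subsingleton H.ConnectedComponent := by
    constructor
    intro a b
    refine SimpleGraph.ConnectedComponent.ind₂ (fun u v => ?_) a b
    exact SimpleGraph.ConnectedComponent.eq.mpr (hH.preconnected u v)
  have hcardcc : Fintype.card H.ConnectedComponent = 1 := by
    have hnec : Nonempty H.ConnectedComponent := ⟨H.connectedComponentMk (Classical.arbitrary V)⟩
    exact Fintype.card_eq_one_iff.mpr ⟨hnec.some, fun y => Subsingleton.elim _ _⟩
  have hkerT : Module.finrank ℝ (LinearMap.ker T) = 1 := by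
    rw [← H.card_connectedComponent_eq_finrank_ker_toLin'_lapMatrix, hcardcc]
  have hn : Module.finrank ℝ (V → ℝ) = Fintype.card V := by
    simp [Module.finrank_pi]
  have hrangeT : Module.finrank ℝ (LinearMap.range T) = Fintype.card V - 1 := by
    have := LinearMap.finrank_range_add_finrank_ker T
    rw [hkerT, hn] at this
    omega
  have hssurj : Function.Surjective s := by
    intro r
    refine ⟨fun _ => r / (Fintype.card V : ℝ), ?_⟩
    rw [hs_apply]
    rw [Finset.sum_const, Finset.card_univ, nsmul_eq_mul]
    field_simp
  have hranges : LinearMap.range s = ⊤ := LinearMap.range_eq_top.mpr hssurj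
  have hkers : Module.finrank ℝ (LinearMap.ker s) = Fintype.card V - 1 := by
    have h2 := LinearMap.finrank_range_add_finrank_ker s
    rw [hranges, hn] at h2
    rw [finrank_top] at h2
    simp [Module.finrank_self] at h2
    omega
  have hle : LinearMap.range T ≤ LinearMap.ker s := by
    rintro x ⟨θ, rfl⟩
    rw [LinearMap.mem_ker, hs_apply]
    have := aux_sum_lap_zero H Set.univ (fun i j _ => Iff.rfl) θ
    simp only [Set.toFinset_univ] at this
    simpa [hT, Matrix.toLin'_apply] using this
  have heq : LinearMap.range T = LinearMap.ker s :=
    Submodule.eq_of_le_of_finrank_eq hle (by rw [hrangeT, hkers])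
  have hcmem : c ∈ LinearMap.ker s := by rw [LinearMap.mem_ker, hs_apply]; exact hc
  rw [← heq] at hcmem
  obtain ⟨θ, hθ⟩ := hcmem
  exact ⟨θ, by rwa [hT, Matrix.toLin'_apply] at hθ⟩

end Aux

/-- The ℓ¹ distance from `c` to the range of `L` is attained. -/
lemma aux_exists_min {V : Type} [Fintype V] [DecidableEq V] (L : Matrix V V ℝ) (c : V → ℝ) :
    ∃ θ₀ : V → ℝ, ∀ θ : V → ℝ,
      ∑ v, |(L *ᵥ θ₀) v - c v| ≤ ∑ v, |(L *ᵥ θ) v - c v| := by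
  set g : (V → ℝ) → ℝ := fun x => ∑ v, |x v - c v| with hg
  have hgc : Continuous g := by
    apply continuous_finset_sum
    intro v _
    exact ((continuous_apply v).sub continuous_const).abs
  have hg0 : g 0 = ∑ v, |c v| := by simp [hg]
  have hg0nn : 0 ≤ g 0 := by
    rw [hg0]; exact Finset.sum_nonneg fun v _ => abs_nonneg _
  set W := LinearMap.range (Matrix.mulVecLin L) with hW
  set K := (W : Set (V → ℝ)) ∩ {x | g x ≤ g 0} with hK
  have h0K : (0 : V → ℝ) ∈ K := ⟨W.zero_mem, show g (0 : V → ℝ) ≤ g 0 from le_rfl⟩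
  have hKclosed : IsClosed K :=
    (Submodule.closed_of_finiteDimensional W).inter (isClosed_le hgc continuous_const)
  have hKsub : K ⊆ Metric.closedBall 0 (2 * g 0) := by
    rintro x ⟨-, hx⟩
    have hx' : g x ≤ g 0 := hx
    rw [Metric.mem_closedBall, dist_zero_right]
    rw [pi_norm_le_iff_of_nonneg (by linarith)]
    intro v
    have h1 : |x v - c v| ≤ g x := by
      apply Finset.single_le_sum (f := fun v => |x v - c v|) (fun i _ => abs_nonneg _)
        (Finset.mem_univ v)
    have h2 : |c v| ≤ g 0 := by
      rw [hg0]
      exact Finset.single_le_sum (f := fun v => |c v|) (fun i _ => abs_nonneg _)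
        (Finset.mem_univ v)
    have : |x v| ≤ |x v - c v| + |c v| := by
      calc |x v| = |(x v - c v) + c v| := by ring_nf
        _ ≤ |x v - c v| + |c v| := abs_add_le _ _
    simp only [Real.norm_eq_abs]
    linarith [hx']
  have hKcompact : IsCompact K :=
    Metric.isCompact_of_isClosed_isBounded hKclosed
      (Metric.isBounded_closedBall.subset hKsub)
  obtain ⟨x₀, hx₀K, hmin⟩ := hKcompact.exists_isMinOn ⟨0, h0K⟩ hgc.continuousOn
  obtain ⟨θ₀, hθ₀⟩ := hx₀K.1
  refine ⟨θ₀, fun θ => ?_⟩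
  have hLθ₀ : L *ᵥ θ₀ = x₀ := by rwa [Matrix.mulVecLin_apply] at hθ₀
  have key : g x₀ ≤ g (L *ᵥ θ) := by
    by_cases h : g (L *ᵥ θ) ≤ g 0
    · have hmem : (L *ᵥ θ) ∈ K :=
        ⟨LinearMap.mem_range.mpr ⟨θ, by rw [Matrix.mulVecLin_apply]⟩, h⟩
      exact (isMinOn_iff.mp hmin) _ hmem
    · have h1 : g x₀ ≤ g 0 := (isMinOn_iff.mp hmin) 0 h0K
      linarith
  rw [hLθ₀]
  exact key


/-- **Proposition 1(I).** Let `G` be a finite simple connected graph on at least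
two vertices, `c` uniquely balanced w.r.t. `G`, and `H ≤ G` a spanning subgraph. Every optimal
solution `(θ*, d₊*, d₋*)` of the connectedness LP for `(H, c)` satisfies
`Σ (d₊* + d₋*) = 0` iff `H` is connected. -/
theorem prop1_I
    {V : Type} [Fintype V] [DecidableEq V]
    (G : SimpleGraph V) (hG : G.Connected) (hcard : 2 ≤ Fintype.card V)
    (c : V → ℝ) (hc : UniquelyBalanced G c)
    (H : SimpleGraph V) (hHG : H ≤ G) :
    (∀ θ dp dm : V → ℝ,
        ((∀ v, 0 ≤ dp v) ∧ (∀ v, 0 ≤ dm v) ∧ H.lapMatrix ℝ *ᵥ θ = c + dp - dm) →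
        (∀ θ' dp' dm' : V → ℝ,
          ((∀ v, 0 ≤ dp' v) ∧ (∀ v, 0 ≤ dm' v) ∧ H.lapMatrix ℝ *ᵥ θ' = c + dp' - dm') →
          ∑ v, (dp v + dm v) ≤ ∑ v, (dp' v + dm' v)) →
        ∑ v, (dp v + dm v) = 0)
      ↔ H.Connected := by
  have hne : Nonempty V := Fintype.card_pos_iff.mp (by omega)
  constructor
  · -- optimal value 0 for all optima → connected
    intro P
    by_contra hH
    -- H is disconnected: get two non-reachable vertices
    have hpre : ¬ H.Preconnected := fun hp => hH ((SimpleGraph.connected_iff (G := H)).mpr ⟨hp, hne⟩)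
    rw [SimpleGraph.Preconnected] at hpre
    push_neg at hpre
    obtain ⟨u, w, huw⟩ := hpre
    set S : Set V := {v | H.Reachable u v} with hSdef
    have hu : u ∈ S := SimpleGraph.Reachable.refl u
    have hw : w ∉ S := huw
    have hSne : S.Nonempty := ⟨u, hu⟩
    have hSuniv : S ≠ Set.univ := fun h => hw (h ▸ Set.mem_univ w)
    have hS : ∀ i j, H.Reachable i j → (i ∈ S ↔ j ∈ S) := fun i j hij =>
      ⟨fun hi => hi.trans hij, fun hj => hj.trans hij.symm⟩
    -- G.induce S is connected
    have hGind : (G.induce S).Connected := by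
      rw [SimpleGraph.connected_iff]
      constructor
      · rintro ⟨x, hx⟩ ⟨y, hy⟩
        have hr : H.Reachable x y := hx.symm.trans hy
        refine hr.elim fun p => ?_
        refine aux_walk_reachable_induce hHG S p hx hy fun v hv => ?_
        exact hx.trans ⟨p.takeUntil v hv⟩
      · exact ⟨⟨u, hu⟩⟩
    -- get a minimizer of the LP
    obtain ⟨θ₀, hmin⟩ := aux_exists_min (H.lapMatrix ℝ) c
    set r : V → ℝ := fun v => (H.lapMatrix ℝ *ᵥ θ₀) v - c v with hr
    set dp : V → ℝ := fun v => max (r v) 0 with hdp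
    set dm : V → ℝ := fun v => max (-(r v)) 0 with hdm
    have habs : ∀ a : ℝ, max a 0 + max (-a) 0 = |a| := by
      intro a
      rcases le_total 0 a with h | h
      · rw [max_eq_left h, max_eq_right (neg_nonpos.mpr h), add_zero, abs_of_nonneg h]
      · rw [max_eq_right h, max_eq_left (neg_nonneg.mpr h), zero_add, abs_of_nonpos h]
    have hfeas : H.lapMatrix ℝ *ᵥ θ₀ = c + dp - dm := by
      funext v
      have := max_zero_sub_eq_self (r v)
      simp only [Pi.sub_apply, Pi.add_apply, hdp, hdm]
      have hrv : r v = (H.lapMatrix ℝ *ᵥ θ₀) v - c v := rfl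
      linarith
    have hsum : ∑ v, (dp v + dm v) = ∑ v, |r v| :=
      Finset.sum_congr rfl fun v _ => habs (r v)
    have hopt : ∀ θ' dp' dm' : V → ℝ,
        ((∀ v, 0 ≤ dp' v) ∧ (∀ v, 0 ≤ dm' v) ∧ H.lapMatrix ℝ *ᵥ θ' = c + dp' - dm') →
        ∑ v, (dp v + dm v) ≤ ∑ v, (dp' v + dm' v) := by
      rintro θ' dp' dm' ⟨h1, h2, h3⟩
      calc ∑ v, (dp v + dm v) = ∑ v, |r v| := hsum
        _ ≤ ∑ v, |(H.lapMatrix ℝ *ᵥ θ') v - c v| := hmin θ'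
        _ ≤ ∑ v, (dp' v + dm' v) := by
            refine Finset.sum_le_sum fun v _ => ?_
            have hv := congrFun h3 v
            simp only [Pi.sub_apply, Pi.add_apply] at hv
            have : (H.lapMatrix ℝ *ᵥ θ') v - c v = dp' v - dm' v := by linarith
            rw [this]
            exact abs_le.mpr ⟨by linarith [h1 v, h2 v], by linarith [h1 v, h2 v]⟩
    have hzero := P θ₀ dp dm ⟨fun v => le_max_right _ _, fun v => le_max_right _ _, hfeas⟩ hopt
    rw [hsum] at hzero
    have hreach : H.lapMatrix ℝ *ᵥ θ₀ = c := by
      funext v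
      have hv : |r v| = 0 := by
        have := (Finset.sum_eq_zero_iff_of_nonneg
          (fun i _ => abs_nonneg (r i))).mp hzero v (Finset.mem_univ v)
        exact this
      have : r v = 0 := abs_eq_zero.mp hv
      have hrv : r v = (H.lapMatrix ℝ *ᵥ θ₀) v - c v := rfl
      linarith
    refine hc.2 S hSne hSuniv hGind ?_
    have := aux_sum_lap_zero H S hS θ₀
    rwa [hreach] at this
  · -- connected → every optimum has value 0
    rintro hH θ dp dm ⟨hdp, hdm, hfeas⟩ hopt
    obtain ⟨θ₀, hθ₀⟩ := aux_lap_surj H hH hcard c hc.1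
    have h1 : ∑ v, (dp v + dm v) ≤ ∑ v, ((0 : V → ℝ) v + (0 : V → ℝ) v) := by
      refine hopt θ₀ 0 0 ⟨fun v => le_refl 0, fun v => le_refl 0, ?_⟩
      rw [hθ₀]; funext v; simp
    simp only [Pi.zero_apply, add_zero, Finset.sum_const_zero] at h1
    have h2 : 0 ≤ ∑ v, (dp v + dm v) :=
      Finset.sum_nonneg fun v _ => add_nonneg (hdp v) (hdm v)
    linarith
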